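/- arXiv:1512.06776 — 10 statements merged into one kernel-verified Lean document; each statement's English description precedes it below -/
import Mathlib

section
/- If S is a finite monoid and E ⊆ E(S) is a subsemilattice containing 1, then every ~R_E-class contains exactly one idempotent from E; namely, for each a ∈ S the product of all e ∈ E with ea = a is the unique element of E that is ~R_E-related to a. -/
/-- If `S` is a finite monoid and `E ⊆ E(S)` is a subsemilattice with
`1 ∈ E`, then every `~R_E`-class contains exactly one idempotent from `E`; namely,
for each `a ∈ S` the product of all `e ∈ E` with `e * a = a` lies in `E`, is
`~R_E`-related to `a`, and is the unique such element of `E`. -/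
theorem tildeR_class_exactly_one_idempotent
    (S : Type*) [Monoid S] [Fintype S] [DecidableEq S] (E : Set S)
    (hidem : ∀ e ∈ E, e * e = e)
    (hclosed : ∀ e ∈ E, ∀ f ∈ E, e * f ∈ E)
    (hcomm : ∀ e ∈ E, ∀ f ∈ E, e * f = f * e)
    (hone : (1 : S) ∈ E) (a : S)
    (p : S)
    (hp : p = Finset.noncommProd ((Set.toFinite {e | e ∈ E ∧ e * a = a}).toFinset) id
      (fun x hx y hy _ => by
        have hx' := ((Set.Finite.mem_toFinset _).mp hx).1
        have hy' := ((Set.Finite.mem_toFinset _).mp hy).1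
        simpa [Commute, SemiconjBy] using (hcomm x hx' y hy'))) :
    p ∈ E ∧ (∀ e ∈ E, (e * p = p ↔ e * a = a)) ∧
      (∀ f ∈ E, (∀ e ∈ E, (e * f = f ↔ e * a = a)) → f = p) := by
  have hmem : ∀ x, x ∈ (Set.toFinite {e | e ∈ E ∧ e * a = a}).toFinset ↔
      x ∈ E ∧ x * a = a := by intro x; simp
  have key : p ∈ E ∧ p * a = a := by
    rw [hp]
    apply Finset.noncommProd_induction _ id _ (fun x => x ∈ E ∧ x * a = a)
    · rintro x y ⟨hxE, hxa⟩ ⟨hyE, hya⟩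
      exact ⟨hclosed x hxE y hyE, by rw [mul_assoc, hya, hxa]⟩
    · exact ⟨hone, one_mul a⟩
    · intro x hx; exact (hmem x).mp hx
  obtain ⟨hpE, hpa⟩ := key
  have absorb : ∀ e ∈ E, e * a = a → e * p = p := by
    intro e heE hea
    have heF : e ∈ (Set.toFinite {e | e ∈ E ∧ e * a = a}).toFinset :=
      (hmem e).mpr ⟨heE, hea⟩
    rw [hp]
    refine Eq.trans (congrArg (e * ·) (Finset.mul_noncommProd_erase _ heF id _).symm)
      (Eq.trans ?_ (Finset.mul_noncommProd_erase _ heF id _))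
    exact (mul_assoc e e _).symm.trans (congrArg (· * _) (hidem e heE))
  refine ⟨hpE, fun e heE => ⟨fun h => ?_, absorb e heE⟩, fun f hfE hf => ?_⟩
  · rw [← hpa, ← mul_assoc, h, hpa]
  · have hfa : f * a = a := (hf f hfE).mp (hidem f hfE)
    have h1 : f * p = p := absorb f hfE hfa
    have h2 : p * f = f := (hf p hpE).mpr hpa
    rw [← h2, ← hcomm f hfE p hpE, h1]
end

section
/- Let S be a semigroup with subsemilattice E ⊆ E(S) such that every ~R_E-class contains a unique idempotent from E, denoted a⁺. Then ~R_E is a left congruence if and only if (ab)⁺ = (ab⁺)⁺ for all a, b ∈ S. -/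
/-- Let `S` be a semigroup with a subsemilattice `E ⊆ E(S)` such that
every `~R_E`-class contains a unique idempotent from `E`, denoted `a⁺` (the function
`plus`). Then `~R_E` is a left congruence iff `(ab)⁺ = (ab⁺)⁺` for all `a, b ∈ S`. -/
theorem left_congruence_iff_plus_identity
    (S : Type*) [Semigroup S] (E : Set S)
    (hidem : ∀ e ∈ E, e * e = e)
    (hclosed : ∀ e ∈ E, ∀ f ∈ E, e * f ∈ E)
    (hcomm : ∀ e ∈ E, ∀ f ∈ E, e * f = f * e)
    (plus : S → S)
    (hplusE : ∀ a : S, plus a ∈ E)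
    (hplusR : ∀ a : S, ∀ e ∈ E, (e * plus a = plus a ↔ e * a = a))
    (hplusU : ∀ a : S, ∀ f ∈ E, (∀ e ∈ E, (e * f = f ↔ e * a = a)) → f = plus a) :
    (∀ a b c : S, (∀ e ∈ E, (e * a = a ↔ e * b = b)) →
        (∀ e ∈ E, (e * (c * a) = c * a ↔ e * (c * b) = c * b))) ↔
      (∀ a b : S, plus (a * b) = plus (a * plus b)) := by
  constructor
  · intro h a b
    have hb : ∀ e ∈ E, (e * b = b ↔ e * plus b = plus b) := by
      intro e he; exact (hplusR b e he).symm
    have hcong := h b (plus b) a hb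
    refine (hplusU (a * b) (plus (a * plus b)) (hplusE _) ?_).symm
    intro e he
    exact (hplusR (a * plus b) e he).trans ((hcong e he).symm)
  · intro h a b c hab e he
    have hpl : plus a = plus b := by
      apply hplusU b (plus a) (hplusE a)
      intro f hf
      exact (hplusR a f hf).trans (hab f hf)
    have h1 : plus (c * a) = plus (c * b) := by
      rw [h c a, h c b, hpl]
    constructor
    · intro hca
      have := ((hplusR (c * a) e he).mpr hca)
      rw [h1] at this
      exact (hplusR (c * b) e he).mp this
    · intro hcb
      have := ((hplusR (c * b) e he).mpr hcb)
      rw [← h1] at this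
      exact (hplusR (c * a) e he).mp this
end

section
/- Let S be an E-Ehresmann semigroup with E principally finite and C its associated Ehresmann category. The map ψ: KC → KS defined by ψ(C(a)) = Σ_{b ≤_r a} μ(b, a)·b, where μ is the Möbius function of the poset (S, ≤_r), is the two-sided inverse of the algebra isomorphism φ(a) = Σ_{b ≤_r a} C(b). -/
/-- An E-Ehresmann semigroup as a (2,1,1)-algebra. -/
class EhresmannSemigroup (S : Type*) extends Semigroup S where
  plus : S → S
  estar : S → S
  plus_mul_self : ∀ x : S, plus x * x = x
  plus_prod_idem : ∀ x y : S, plus (plus x * plus y) = plus x * plus y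
  plus_comm : ∀ x y : S, plus x * plus y = plus y * plus x
  plus_absorb : ∀ x y : S, plus x * plus (x * y) = plus (x * y)
  plus_mul_plus : ∀ x y : S, plus (x * y) = plus (x * plus y)
  mul_estar_self : ∀ x : S, x * estar x = x
  estar_prod_idem : ∀ x y : S, estar (estar x * estar y) = estar x * estar y
  estar_comm : ∀ x y : S, estar x * estar y = estar y * estar x
  estar_absorb : ∀ x y : S, estar (x * y) * estar y = estar (x * y)
  estar_mul_estar : ∀ x y : S, estar (x * y) = estar (estar x * y)
  estar_plus : ∀ x : S, estar (plus x) = plus x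
  plus_estar : ∀ x : S, plus (estar x) = estar x

open EhresmannSemigroup

section MobiusAux

variable {S : Type*} [EhresmannSemigroup S]

/-- The natural right order `b ≤_r a`. -/
def rleE (b a : S) : Prop := b = plus b * a

lemma rleE_refl (a : S) : rleE a a := (plus_mul_self a).symm

lemma rleE_plus {b a : S} (h : rleE b a) : plus b * plus a = plus b := by
  have h2 : plus b = plus (plus b * a) := by rw [← h]
  rw [plus_mul_plus, plus_prod_idem] at h2
  exact h2.symm

lemma rleE_trans {c b a : S} (h1 : rleE c b) (h2 : rleE b a) : rleE c a := by
  have h3 : c = plus c * (plus b * a) := by rw [← h2]; exact h1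
  rw [← mul_assoc, rleE_plus h1] at h3
  exact h3

lemma rleE_antisymm {a b : S} (h1 : rleE a b) (h2 : rleE b a) : a = b := by
  have hp : plus a = plus b := by
    rw [← rleE_plus h1, plus_comm, rleE_plus h2]
  calc a = plus a * b := h1
  _ = plus b * b := by rw [hp]
  _ = b := plus_mul_self b

lemma rleE_exists_maximal [DecidableEq S] :
    ∀ s : Finset S, s.Nonempty → ∃ a ∈ s, ∀ b ∈ s, rleE a b → a = b := by
  intro s
  induction s using Finset.induction_on with
  | empty => intro h; exact absurd h (by simp)
  | @insert c s hc ih =>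
    intro _
    by_cases hs : s.Nonempty
    · obtain ⟨a, ha, hmax⟩ := ih hs
      by_cases hac : rleE a c ∧ a ≠ c
      · refine ⟨c, Finset.mem_insert_self _ _, ?_⟩
        intro b hb hcb
        rcases Finset.mem_insert.mp hb with rfl | hb
        · rfl
        · have hab := hmax b hb (rleE_trans hac.1 hcb)
          subst hab
          exact (hac.2 (rleE_antisymm hac.1 hcb)).elim
      · refine ⟨a, Finset.mem_insert_of_mem ha, ?_⟩
        intro b hb hab
        rcases Finset.mem_insert.mp hb with rfl | hb
        · by_contra hne
          exact hac ⟨hab, hne⟩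
        · exact hmax b hb hab
    · refine ⟨c, Finset.mem_insert_self _ _, ?_⟩
      intro b hb hcb
      rcases Finset.mem_insert.mp hb with rfl | hb
      · rfl
      · exact absurd ⟨b, hb⟩ hs

end MobiusAux

/-- With `S` an E-Ehresmann semigroup with principally finite `E`
and `μ` the Möbius function of the locally finite poset `(S, ≤_r)`, the map
`ψ : KC → KS` defined by `ψ(C(a)) = Σ_{b ≤_r a} μ(b,a)·b` is the two-sided
inverse of the algebra isomorphism `φ(a) = Σ_{b ≤_r a} C(b)`. -/
theorem ehresmann_algebra_iso_inverse (S : Type*) [EhresmannSemigroup S] [DecidableEq S]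
    (K : Type*) [CommRing K]
    (hEfin : ∀ e ∈ Set.range (plus : S → S),
      {f ∈ Set.range (plus : S → S) | f = f * e}.Finite)
    (hfin : ∀ a : S, {b : S | b = plus b * a}.Finite)
    -- the Möbius function of the poset `≤_r`:
    (μ : S → S → K)
    (hμ_refl : ∀ a : S, μ a a = 1)
    (hμ_supp : ∀ a b : S, ¬ a = plus a * b → μ a b = 0)
    (hμ_sum : ∀ a b : S, a = plus a * b → a ≠ b →
      (((hfin b).toFinset.filter (fun c => a = plus a * c)).sum fun c => μ a c) = 0)
    (φ ψ : MonoidAlgebra K S → MonoidAlgebra K S)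
    (hφ : ∀ f : MonoidAlgebra K S,
      φ f = MonoidAlgebra.ofCoeff (f.coeff.sum fun a k => ((hfin a).toFinset).sum fun b => Finsupp.single b k))
    (hψ : ∀ f : MonoidAlgebra K S,
      ψ f = MonoidAlgebra.ofCoeff (f.coeff.sum fun a k => ((hfin a).toFinset).sum fun b => Finsupp.single b (μ b a * k))) :
    (∀ f : MonoidAlgebra K S, ψ (φ f) = f) ∧
    (∀ f : MonoidAlgebra K S, φ (ψ f) = f) := by
  classical
  set T : S → Finset S := fun a => (hfin a).toFinset with hT
  have hmemT : ∀ {b a : S}, b ∈ T a ↔ rleE b a := by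
    intro b a
    simp [hT, Set.Finite.mem_toFinset, rleE]
  -- additivity
  have hφadd : ∀ f g : MonoidAlgebra K S, φ (f + g) = φ f + φ g := by
    intro f g
    rw [hφ, hφ, hφ, MonoidAlgebra.coeff_add, ← MonoidAlgebra.ofCoeff_add]
    congr 1
    apply Finsupp.sum_add_index' <;> intros <;>
      simp [Finsupp.single_add, Finset.sum_add_distrib]
  have hψadd : ∀ f g : MonoidAlgebra K S, ψ (f + g) = ψ f + ψ g := by
    intro f g
    rw [hψ, hψ, hψ, MonoidAlgebra.coeff_add, ← MonoidAlgebra.ofCoeff_add]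
    congr 1
    apply Finsupp.sum_add_index' <;> intros <;>
      simp [mul_add, Finsupp.single_add, Finset.sum_add_distrib]
  let Φ : MonoidAlgebra K S →+ MonoidAlgebra K S :=
    AddMonoidHom.mk' φ (fun f g => hφadd f g)
  let Ψ : MonoidAlgebra K S →+ MonoidAlgebra K S :=
    AddMonoidHom.mk' ψ (fun f g => hψadd f g)
  have hφ0 : φ 0 = 0 := Φ.map_zero
  have hψ0 : ψ 0 = 0 := Ψ.map_zero
  -- values on singles
  have hφsingle : ∀ (a : S) (k : K),
      φ (MonoidAlgebra.single a k) = ∑ b ∈ T a, MonoidAlgebra.single b k := by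
    intro a k
    rw [hφ, MonoidAlgebra.coeff_single, Finsupp.sum_single_index (by simp), MonoidAlgebra.ofCoeff_sum]
    rfl
  have hψsingle : ∀ (a : S) (k : K),
      ψ (MonoidAlgebra.single a k) = ∑ b ∈ T a, MonoidAlgebra.single b (μ b a * k) := by
    intro a k
    rw [hψ, MonoidAlgebra.coeff_single, Finsupp.sum_single_index (by simp), MonoidAlgebra.ofCoeff_sum]
    rfl
  -- key computation: ψ (φ (single a k)) = single a k
  have key1 : ∀ (a : S) (k : K),
      ψ (φ (MonoidAlgebra.single a k)) = MonoidAlgebra.single a k := by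
    intro a k
    rw [hφsingle]
    rw [show ψ (∑ b ∈ T a, MonoidAlgebra.single b k)
        = ∑ b ∈ T a, ψ (MonoidAlgebra.single b k) from
      map_sum Ψ (fun b => MonoidAlgebra.single b k) (T a)]
    ext x
    rw [MonoidAlgebra.coeff_sum, Finsupp.finset_sum_apply]
    have hinner : ∀ b ∈ T a,
        (ψ (MonoidAlgebra.single b k)).coeff x = if x ∈ T b then μ x b * k else 0 := by
      intro b _
      rw [hψsingle, MonoidAlgebra.coeff_sum, Finsupp.finset_sum_apply]
      simp only [MonoidAlgebra.coeff_single, Finsupp.single_apply]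
      rw [Finset.sum_ite_eq' (T b) x (fun c => μ c b * k)]
    rw [Finset.sum_congr rfl hinner, ← Finset.sum_filter]
    rw [MonoidAlgebra.coeff_single, Finsupp.single_apply]
    by_cases hxa : x = a
    · subst hxa
      have hfilter : (T x).filter (fun b => x ∈ T b) = {x} := by
        ext b
        simp only [Finset.mem_filter, Finset.mem_singleton]
        constructor
        · rintro ⟨h1, h2⟩
          exact rleE_antisymm (hmemT.mp h1) (hmemT.mp h2)
        · rintro rfl
          exact ⟨hmemT.mpr (rleE_refl b), hmemT.mpr (rleE_refl b)⟩
      rw [hfilter]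
      simp [hμ_refl]
    · rw [if_neg (fun h => hxa h.symm)]
      by_cases hx : x ∈ T a
      · have hxr : rleE x a := hmemT.mp hx
        have hset : (T a).filter (fun b => x ∈ T b)
            = (hfin a).toFinset.filter (fun c => x = plus x * c) := by
          apply Finset.filter_congr
          intro b _
          constructor
          · intro h; exact hmemT.mp h
          · intro h; exact hmemT.mpr h
        rw [hset, ← Finset.sum_mul, hμ_sum x a hxr hxa, zero_mul]
      · have hempty : (T a).filter (fun b => x ∈ T b) = ∅ := by
          ext b
          simp only [Finset.mem_filter, Finset.notMem_empty, iff_false, not_and]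
          intro h1 h2
          exact hx (hmemT.mpr (rleE_trans (hmemT.mp h2) (hmemT.mp h1)))
        rw [hempty, Finset.sum_empty]
  -- part 1
  have part1 : ∀ f : MonoidAlgebra K S, ψ (φ f) = f := by
    intro f
    induction f using MonoidAlgebra.induction with
    | zero => rw [hφ0, hψ0]
    | single_add a k g _ _ ih =>
      rw [hφadd, hψadd, key1, ih]
  -- pointwise formula for ψ
  have hψ_apply : ∀ (f : MonoidAlgebra K S) (x : S),
      (ψ f).coeff x = ∑ b ∈ f.coeff.support, (if x ∈ T b then μ x b * f.coeff b else 0) := by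
    intro f x
    rw [hψ, MonoidAlgebra.coeff_ofCoeff, Finsupp.sum_apply]
    rw [Finsupp.sum]
    apply Finset.sum_congr rfl
    intro b _
    rw [Finsupp.finset_sum_apply]
    simp only [Finsupp.single_apply]
    rw [Finset.sum_ite_eq' (T b) x (fun c => μ c b * f.coeff b)]
  -- injectivity of ψ
  have hψinj : ∀ f : MonoidAlgebra K S, ψ f = 0 → f = 0 := by
    intro f hf
    by_contra hne
    obtain ⟨a, ha, hmax⟩ := rleE_exists_maximal f.coeff.support
      (Finsupp.support_nonempty_iff.mpr (mt MonoidAlgebra.coeff_eq_zero.mp hne))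
    have : (ψ f).coeff a = f.coeff a := by
      rw [hψ_apply]
      rw [Finset.sum_eq_single a]
      · rw [if_pos (hmemT.mpr (rleE_refl a)), hμ_refl, one_mul]
      · intro b hb hba
        rw [if_neg]
        intro hmem
        exact hba ((hmax b hb (hmemT.mp hmem)).symm)
      · intro h; exact absurd ha h
    rw [hf, MonoidAlgebra.coeff_zero, Finsupp.zero_apply] at this
    exact absurd (Finsupp.mem_support_iff.mp ha) (fun h => h this.symm)
  refine ⟨part1, ?_⟩
  intro f
  have h1 : ψ (φ (ψ f) - f) = 0 := by
    rw [show ψ (φ (ψ f) - f) = ψ (φ (ψ f)) - ψ f from Ψ.map_sub _ _]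
    rw [part1, sub_self]
  have := hψinj _ h1
  exact sub_eq_zero.mp this
end

section
/- If S is an E-Ehresmann semigroup with E finite, then the semigroup algebra KS over a commutative unital ring K is a unital algebra; an identity element is ψ(Σ_{e∈E} C(e)), i.e., the image in KS of the sum of identity morphisms of the associated category under the Möbius inversion map. -/
open EhresmannSemigroup

section AuxSemigroup

variable {S : Type*} [EhresmannSemigroup S]

lemma eh_plus_plus (x : S) : plus (plus x) = plus x := by
  rw [← estar_plus x, plus_estar]

lemma eh_le_plus {a b : S} (hab : a = plus a * b) : plus a = plus a * plus b := by
  conv_lhs => rw [hab]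
  rw [plus_mul_plus, plus_prod_idem]

lemma eh_le_trans {a b c : S} (hab : a = plus a * b) (hbc : b = plus b * c) :
    a = plus a * c := by
  have h1 : plus a = plus a * plus b := eh_le_plus hab
  calc a = plus a * b := hab
    _ = plus a * (plus b * c) := by rw [← hbc]
    _ = plus a * plus b * c := by rw [mul_assoc]
    _ = plus a * c := by rw [← h1]

lemma eh_le_antisymm {a b : S} (hab : a = plus a * b) (hba : b = plus b * a) : a = b := by
  have h1 : plus a = plus a * plus b := eh_le_plus hab
  have h2 : plus b = plus b * plus a := eh_le_plus hba
  have h3 : plus a = plus b := by rw [h1, plus_comm, ← h2]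
  calc a = plus a * b := hab
    _ = plus b * b := by rw [h3]
    _ = b := plus_mul_self b

lemma eh_proj_of_le {e b : S} (he : plus e = e) (h : b = plus b * e) : plus b = b := by
  have h1 : plus b = plus b * plus e := eh_le_plus h
  rw [he] at h1
  exact h1.trans h.symm

lemma eh_proj_mul {x y : S} (hx : plus x = x) (hy : plus y = y) : plus (x * y) = x * y := by
  conv_lhs => rw [← hx, ← hy]
  rw [plus_prod_idem, hx, hy]

lemma eh_proj_comm {x y : S} (hx : plus x = x) (hy : plus y = y) : x * y = y * x := by
  conv_lhs => rw [← hx, ← hy]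
  conv_rhs => rw [← hx, ← hy]
  exact plus_comm x y

lemma eh_proj_idem {x : S} (hx : plus x = x) : x * x = x := by
  nth_rewrite 1 [← hx]
  exact plus_mul_self x

lemma eh_bf_le_f {b f : S} (hb : plus b = b) (hf : plus f = f) :
    b * f = plus (b * f) * f := by
  rw [eh_proj_mul hb hf, mul_assoc, eh_proj_idem hf]

lemma eh_cond_iff {b c f : S} (hb : plus b = b) (hc : plus c = c)
    (hf : plus f = f) (hcf : c = plus c * f) :
    (c = plus c * (b * f)) ↔ (c = plus c * b) := by
  rw [hc] at hcf ⊢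
  constructor
  · intro h
    have hfb : f * b = b * f := eh_proj_comm hf hb
    have hcb : c * b = c := by
      conv_lhs => rw [h]
      rw [mul_assoc, mul_assoc, hfb, ← mul_assoc b b f, eh_proj_idem hb, ← h]
    exact hcb.symm
  · intro h
    have hcbf : c * (b * f) = c := by
      rw [← mul_assoc, ← h, ← hcf]
    exact hcbf.symm

end AuxSemigroup

/-- The interval `{c | c ≤ᵣ b, a ≤ᵣ c}` (here `x ≤ᵣ y ↔ x = x⁺y`). -/
noncomputable def Jset {S : Type*} [EhresmannSemigroup S] [DecidableEq S]
    (hfin : ∀ a : S, {b : S | b = plus b * a}.Finite) (a b : S) : Finset S :=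
  (hfin b).toFinset.filter (fun c => a = plus a * c)

/-- If `S` is an E-Ehresmann semigroup with `E` finite, then the
semigroup algebra `KS` over a commutative unital ring `K` is a unital algebra;
an identity element is `ψ(Σ_{e∈E} C(e)) = Σ_{e∈E} Σ_{b ≤_r e} μ(b,e)·b`, the image
in `KS` of the sum of the identity morphisms under the Möbius inversion map. -/
theorem ehresmann_algebra_unital (S : Type*) [EhresmannSemigroup S] [DecidableEq S]
    (K : Type*) [CommRing K]
    (hE : (Set.range (plus : S → S)).Finite)
    (hfin : ∀ a : S, {b : S | b = plus b * a}.Finite)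
    -- the Möbius function of the poset `≤_r`:
    (μ : S → S → K)
    (hμ_refl : ∀ a : S, μ a a = 1)
    (hμ_supp : ∀ a b : S, ¬ a = plus a * b → μ a b = 0)
    (hμ_sum : ∀ a b : S, a = plus a * b → a ≠ b →
      (((hfin b).toFinset.filter (fun c => a = plus a * c)).sum fun c => μ a c) = 0)
    (u : MonoidAlgebra K S)
    (hu : u = hE.toFinset.sum fun e =>
      ((hfin e).toFinset).sum fun b => MonoidAlgebra.single b (μ b e)) :
    ∀ f : MonoidAlgebra K S, u * f = f ∧ f * u = f := by
  -- membership lemmas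
  have hmemI : ∀ b e : S, b ∈ (hfin e).toFinset ↔ b = plus b * e := by
    intro b e
    rw [Set.Finite.mem_toFinset]
    exact Iff.rfl
  have hmemJ : ∀ a b c : S, c ∈ Jset hfin a b ↔ (c = plus c * b ∧ a = plus a * c) := by
    intro a b c
    simp [Jset, Set.Finite.mem_toFinset, Finset.mem_filter, Set.mem_setOf_eq]
  have hprojE : ∀ e ∈ hE.toFinset, plus e = e := by
    intro e he
    obtain ⟨x, hx⟩ := (Set.Finite.mem_toFinset hE).1 he
    rw [← hx, eh_plus_plus]
  -- row Möbius identity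
  have hrow : ∀ g b : S, g = plus g * b →
      (∑ c ∈ Jset hfin g b, μ g c) = if g = b then (1 : K) else 0 := by
    intro g b hgb
    by_cases h : g = b
    · subst h
      rw [if_pos rfl]
      have hsingle : Jset hfin g g = {g} := by
        ext c
        rw [hmemJ, Finset.mem_singleton]
        constructor
        · rintro ⟨h1, h2⟩; exact eh_le_antisymm h1 h2
        · rintro rfl; exact ⟨(plus_mul_self c).symm, (plus_mul_self c).symm⟩
      rw [hsingle, Finset.sum_singleton, hμ_refl]
    · rw [if_neg h]
      exact hμ_sum g b hgb h
  -- column (dual) Möbius identity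
  have hcol : ∀ (e : S) (n : ℕ) (g : S), g = plus g * e →
      (Jset hfin g e).card ≤ n →
      (∑ b ∈ Jset hfin g e, μ b e) = if g = e then (1 : K) else 0 := by
    intro e n
    induction n with
    | zero =>
      intro g hge hcard
      exfalso
      have hg : g ∈ Jset hfin g e := (hmemJ g e g).2 ⟨hge, (plus_mul_self g).symm⟩
      have := Finset.card_pos.mpr ⟨g, hg⟩
      omega
    | succ n ih =>
      intro g hge hcard
      by_cases hcase : g = e
      · subst hcase
        rw [if_pos rfl]
        have hsingle : Jset hfin g g = {g} := by
          ext c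
          rw [hmemJ, Finset.mem_singleton]
          constructor
          · rintro ⟨h1, h2⟩; exact eh_le_antisymm h1 h2
          · rintro rfl; exact ⟨(plus_mul_self c).symm, (plus_mul_self c).symm⟩
        rw [hsingle, Finset.sum_singleton, hμ_refl]
      · rw [if_neg hcase]
        have hgJ : g ∈ Jset hfin g e := (hmemJ g e g).2 ⟨hge, (plus_mul_self g).symm⟩
        have heJ : e ∈ Jset hfin g e := (hmemJ g e e).2 ⟨(plus_mul_self e).symm, hge⟩
        have key1 : (∑ b ∈ Jset hfin g e, (∑ d ∈ Jset hfin g b, μ g d) * μ b e) = μ g e := by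
          have h1 : ∀ b ∈ Jset hfin g e,
              (∑ d ∈ Jset hfin g b, μ g d) * μ b e = if g = b then μ b e else 0 := by
            intro b hb
            rw [hrow g b ((hmemJ g e b).1 hb).2]
            by_cases h : g = b <;> simp [h]
          rw [Finset.sum_congr rfl h1, Finset.sum_ite_eq (Jset hfin g e) g (fun b => μ b e),
            if_pos hgJ]
        have key2 : (∑ b ∈ Jset hfin g e, (∑ d ∈ Jset hfin g b, μ g d) * μ b e)
            = ∑ d ∈ Jset hfin g e, μ g d * (∑ b ∈ Jset hfin d e, μ b e) := by
          calc (∑ b ∈ Jset hfin g e, (∑ d ∈ Jset hfin g b, μ g d) * μ b e)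
              = ∑ b ∈ Jset hfin g e, ∑ d ∈ Jset hfin g b, μ g d * μ b e :=
                Finset.sum_congr rfl fun b _ => Finset.sum_mul _ _ _
            _ = ∑ d ∈ Jset hfin g e, ∑ b ∈ Jset hfin d e, μ g d * μ b e := by
                refine Finset.sum_comm' ?_
                intro b d
                rw [hmemJ, hmemJ, hmemJ, hmemJ]
                constructor
                · rintro ⟨⟨hbe, hgb⟩, hdb, hgd⟩
                  exact ⟨⟨hbe, hdb⟩, eh_le_trans hdb hbe, hgd⟩
                · rintro ⟨⟨hbe, hdb⟩, _, hgd⟩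
                  exact ⟨⟨hbe, eh_le_trans hgd hdb⟩, hdb, hgd⟩
            _ = ∑ d ∈ Jset hfin g e, μ g d * (∑ b ∈ Jset hfin d e, μ b e) :=
                Finset.sum_congr rfl fun d _ => (Finset.mul_sum _ _ _).symm
        have key3 : ∀ d ∈ Jset hfin g e, d ≠ g →
            (∑ b ∈ Jset hfin d e, μ b e) = if d = e then (1 : K) else 0 := by
          intro d hd hdg
          obtain ⟨hde, hgd⟩ := (hmemJ g e d).1 hd
          refine ih d hde ?_
          have hsub : Jset hfin d e ⊆ Jset hfin g e := by
            intro b hb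
            obtain ⟨hbe, hdb⟩ := (hmemJ d e b).1 hb
            exact (hmemJ g e b).2 ⟨hbe, eh_le_trans hgd hdb⟩
          have hgn : g ∉ Jset hfin d e := by
            intro hgm
            obtain ⟨-, hdg'⟩ := (hmemJ d e g).1 hgm
            exact hdg (eh_le_antisymm hdg' hgd)
          have hlt : (Jset hfin d e).card < (Jset hfin g e).card :=
            Finset.card_lt_card ((Finset.ssubset_iff_of_subset hsub).2 ⟨g, hgJ, hgn⟩)
          omega
        have key4 : (∑ d ∈ Jset hfin g e, μ g d * (∑ b ∈ Jset hfin d e, μ b e))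
            = (∑ b ∈ Jset hfin g e, μ b e) + μ g e := by
          have h2 : ∀ d ∈ Jset hfin g e, μ g d * (∑ b ∈ Jset hfin d e, μ b e)
              = (if d = g then (∑ b ∈ Jset hfin g e, μ b e) else 0)
                + (if d = e then μ g e else 0) := by
            intro d hd
            by_cases h : d = g
            · subst h
              rw [hμ_refl, one_mul, if_pos rfl, if_neg hcase, add_zero]
            · rw [key3 d hd h, if_neg h, zero_add]
              by_cases h2 : d = e <;> simp [h2]
          rw [Finset.sum_congr rfl h2, Finset.sum_add_distrib,
            Finset.sum_ite_eq' (Jset hfin g e) g (fun _ => (∑ b ∈ Jset hfin g e, μ b e)),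
            Finset.sum_ite_eq' (Jset hfin g e) e (fun _ => μ g e), if_pos hgJ, if_pos heJ]
        have hfinal : (∑ b ∈ Jset hfin g e, μ b e) + μ g e = μ g e := by
          rw [← key4, ← key2, key1]
        exact add_right_cancel (hfinal.trans (zero_add (μ g e)).symm)
  -- generic Möbius inversion step
  have hinv : ∀ (F : S → K) (f g : S), g = plus g * f →
      (∑ c ∈ Jset hfin g f, μ g c * (∑ x ∈ Jset hfin c f, F x)) = F g := by
    intro F f g hg
    have hgmem : g ∈ Jset hfin g f := (hmemJ g f g).2 ⟨hg, (plus_mul_self g).symm⟩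
    calc (∑ c ∈ Jset hfin g f, μ g c * (∑ x ∈ Jset hfin c f, F x))
        = ∑ c ∈ Jset hfin g f, ∑ x ∈ Jset hfin c f, μ g c * F x :=
          Finset.sum_congr rfl fun c _ => Finset.mul_sum _ _ _
      _ = ∑ x ∈ Jset hfin g f, ∑ c ∈ Jset hfin g x, μ g c * F x := by
          refine Finset.sum_comm' ?_
          intro c x
          rw [hmemJ, hmemJ, hmemJ, hmemJ]
          constructor
          · rintro ⟨⟨hcf, hgc⟩, hxf, hcx⟩
            exact ⟨⟨hcx, hgc⟩, hxf, eh_le_trans hgc hcx⟩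
          · rintro ⟨⟨hcx, hgc⟩, hxf, _⟩
            exact ⟨⟨eh_le_trans hcx hxf, hgc⟩, hxf, hcx⟩
      _ = ∑ x ∈ Jset hfin g f, (∑ c ∈ Jset hfin g x, μ g c) * F x :=
          Finset.sum_congr rfl fun x _ => (Finset.sum_mul _ _ _).symm
      _ = ∑ x ∈ Jset hfin g f, (if g = x then (1 : K) else 0) * F x := by
          refine Finset.sum_congr rfl fun x hx => ?_
          rw [hrow g x ((hmemJ g f x).1 hx).2]
      _ = ∑ x ∈ Jset hfin g f, (if g = x then F x else 0) := by
          refine Finset.sum_congr rfl fun x _ => ?_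
          by_cases h : g = x <;> simp [h]
      _ = F g := by
          rw [Finset.sum_ite_eq (Jset hfin g f) g F, if_pos hgmem]
  -- the "upper sums are 1" computation
  have hU : ∀ (f : S), plus f = f → ∀ (c : S), c = plus c * f →
      (∑ x ∈ Jset hfin c f, ∑ e ∈ hE.toFinset, ∑ b ∈ (hfin e).toFinset,
        (if b * f = x then μ b e else 0)) = 1 := by
    intro f hf c hcf
    have hcproj : plus c = c := eh_proj_of_le hf hcf
    calc (∑ x ∈ Jset hfin c f, ∑ e ∈ hE.toFinset, ∑ b ∈ (hfin e).toFinset,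
          (if b * f = x then μ b e else 0))
        = ∑ e ∈ hE.toFinset, ∑ x ∈ Jset hfin c f, ∑ b ∈ (hfin e).toFinset,
            (if b * f = x then μ b e else 0) := Finset.sum_comm
      _ = ∑ e ∈ hE.toFinset, ∑ b ∈ (hfin e).toFinset, ∑ x ∈ Jset hfin c f,
            (if b * f = x then μ b e else 0) :=
          Finset.sum_congr rfl fun e _ => Finset.sum_comm
      _ = ∑ e ∈ hE.toFinset, ∑ b ∈ (hfin e).toFinset,
            (if c = plus c * b then μ b e else 0) := by
          refine Finset.sum_congr rfl fun e he => Finset.sum_congr rfl fun b hb => ?_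
          rw [Finset.sum_ite_eq (Jset hfin c f) (b * f) (fun _ => μ b e)]
          have hbproj : plus b = b := eh_proj_of_le (hprojE e he) ((hmemI b e).1 hb)
          have hmem_iff : (b * f ∈ Jset hfin c f) ↔ (c = plus c * b) := by
            rw [hmemJ]
            constructor
            · rintro ⟨-, h2⟩
              exact (eh_cond_iff hbproj hcproj hf hcf).1 h2
            · intro h
              exact ⟨eh_bf_le_f hbproj hf, (eh_cond_iff hbproj hcproj hf hcf).2 h⟩
          by_cases h : c = plus c * b
          · rw [if_pos (hmem_iff.2 h), if_pos h]
          · rw [if_neg (fun hm => h (hmem_iff.1 hm)), if_neg h]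
      _ = ∑ e ∈ hE.toFinset, (if c = e then (1 : K) else 0) := by
          refine Finset.sum_congr rfl fun e he => ?_
          by_cases hce : c = plus c * e
          · rw [← Finset.sum_filter]
            exact hcol e (Jset hfin c e).card c hce le_rfl
          · have h0 : ∀ b ∈ (hfin e).toFinset, (if c = plus c * b then μ b e else 0) = 0 := by
              intro b hb
              rw [if_neg]
              intro hcb
              exact hce (eh_le_trans hcb ((hmemI b e).1 hb))
            rw [Finset.sum_congr rfl h0, Finset.sum_const_zero, if_neg]
            intro hceq
            apply hce
            rw [← hceq]
            exact (plus_mul_self c).symm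
      _ = 1 := by
          rw [Finset.sum_ite_eq hE.toFinset c (fun _ => (1 : K)),
            if_pos ((Set.Finite.mem_toFinset hE).2 ⟨c, hcproj⟩)]
  -- the key coefficient identity
  have hA : ∀ (f : S), plus f = f → ∀ (g : S), g = plus g * f →
      (∑ e ∈ hE.toFinset, ∑ b ∈ (hfin e).toFinset, (if b * f = g then μ b e else 0))
        = if g = f then (1 : K) else 0 := by
    intro f hf g hg
    have h1 := hinv (fun x => ∑ e ∈ hE.toFinset, ∑ b ∈ (hfin e).toFinset,
      (if b * f = x then μ b e else 0)) f g hg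
    have h2 : ∀ c ∈ Jset hfin g f,
        μ g c * (∑ x ∈ Jset hfin c f, ∑ e ∈ hE.toFinset, ∑ b ∈ (hfin e).toFinset,
          (if b * f = x then μ b e else 0)) = μ g c := by
      intro c hc
      rw [hU f hf c ((hmemJ g f c).1 hc).1, mul_one]
    calc (∑ e ∈ hE.toFinset, ∑ b ∈ (hfin e).toFinset, (if b * f = g then μ b e else 0))
        = ∑ c ∈ Jset hfin g f, μ g c * (∑ x ∈ Jset hfin c f,
            ∑ e ∈ hE.toFinset, ∑ b ∈ (hfin e).toFinset,
              (if b * f = x then μ b e else 0)) := h1.symm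
      _ = ∑ c ∈ Jset hfin g f, μ g c := Finset.sum_congr rfl h2
      _ = if g = f then (1 : K) else 0 := hrow g f hg
  -- pushing `single` through sums
  have hpush : ∀ (a : S) (T : Finset S) (F : S → K),
      (MonoidAlgebra.single a (∑ x ∈ T, F x) : MonoidAlgebra K S)
        = ∑ x ∈ T, (MonoidAlgebra.single a (F x) : MonoidAlgebra K S) :=
    fun a T F => map_sum (MonoidAlgebra.singleAddHom a) F T
  -- left key lemma
  have hkeyL : ∀ (s : S) (k : K), u * (MonoidAlgebra.single s k : MonoidAlgebra K S) = MonoidAlgebra.single s k := by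
    intro s k
    have hF : plus (plus s) = plus s := eh_plus_plus s
    have hFmem : plus s ∈ (hfin (plus s)).toFinset := by
      rw [hmemI, hF]
      exact (eh_proj_idem hF).symm
    calc u * (MonoidAlgebra.single s k : MonoidAlgebra K S)
        = ∑ e ∈ hE.toFinset, (∑ b ∈ (hfin e).toFinset,
            (MonoidAlgebra.single b (μ b e) : MonoidAlgebra K S)) * (MonoidAlgebra.single s k : MonoidAlgebra K S) := by
          rw [hu, Finset.sum_mul]
      _ = ∑ e ∈ hE.toFinset, ∑ b ∈ (hfin e).toFinset,
            (MonoidAlgebra.single (b * s) (μ b e * k) : MonoidAlgebra K S) := by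
          refine Finset.sum_congr rfl fun e _ => ?_
          rw [Finset.sum_mul]
          exact Finset.sum_congr rfl fun b _ => MonoidAlgebra.single_mul_single _ _ _ _
      _ = ∑ e ∈ hE.toFinset, ∑ b ∈ (hfin e).toFinset, ∑ g ∈ (hfin (plus s)).toFinset,
            (if b * plus s = g then (MonoidAlgebra.single (g * s) (μ b e * k) : MonoidAlgebra K S)
              else 0) := by
          refine Finset.sum_congr rfl fun e he => Finset.sum_congr rfl fun b hb => ?_
          rw [Finset.sum_ite_eq ((hfin (plus s)).toFinset) (b * plus s)
            (fun g => (MonoidAlgebra.single (g * s) (μ b e * k) : MonoidAlgebra K S))]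
          have hbproj : plus b = b := eh_proj_of_le (hprojE e he) ((hmemI b e).1 hb)
          have hbF : b * plus s ∈ (hfin (plus s)).toFinset := by
            rw [hmemI]
            exact eh_bf_le_f hbproj hF
          rw [if_pos hbF, mul_assoc, plus_mul_self]
      _ = ∑ g ∈ (hfin (plus s)).toFinset, ∑ e ∈ hE.toFinset, ∑ b ∈ (hfin e).toFinset,
            (if b * plus s = g then (MonoidAlgebra.single (g * s) (μ b e * k) : MonoidAlgebra K S)
              else 0) :=
          (Finset.sum_congr rfl fun e _ => Finset.sum_comm).trans Finset.sum_comm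
      _ = ∑ g ∈ (hfin (plus s)).toFinset,
            (MonoidAlgebra.single (g * s) ((∑ e ∈ hE.toFinset, ∑ b ∈ (hfin e).toFinset,
              (if b * plus s = g then μ b e else 0)) * k) : MonoidAlgebra K S) := by
          refine Finset.sum_congr rfl fun g _ => Eq.symm ?_
          calc (MonoidAlgebra.single (g * s) ((∑ e ∈ hE.toFinset, ∑ b ∈ (hfin e).toFinset,
                (if b * plus s = g then μ b e else 0)) * k) : MonoidAlgebra K S)
              = ∑ e ∈ hE.toFinset, (MonoidAlgebra.single (g * s)
                  ((∑ b ∈ (hfin e).toFinset, (if b * plus s = g then μ b e else 0)) * k)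
                    : MonoidAlgebra K S) := by
                rw [Finset.sum_mul]
                exact hpush _ _ _
            _ = ∑ e ∈ hE.toFinset, ∑ b ∈ (hfin e).toFinset, (MonoidAlgebra.single (g * s)
                  ((if b * plus s = g then μ b e else 0) * k) : MonoidAlgebra K S) := by
                refine Finset.sum_congr rfl fun e _ => ?_
                rw [Finset.sum_mul]
                exact hpush _ _ _
            _ = ∑ e ∈ hE.toFinset, ∑ b ∈ (hfin e).toFinset,
                  (if b * plus s = g
                    then (MonoidAlgebra.single (g * s) (μ b e * k) : MonoidAlgebra K S) else 0) := by
                refine Finset.sum_congr rfl fun e _ => Finset.sum_congr rfl fun b _ => ?_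
                by_cases h : b * plus s = g <;> simp [h]
      _ = ∑ g ∈ (hfin (plus s)).toFinset,
            (if g = plus s then (MonoidAlgebra.single (g * s) k : MonoidAlgebra K S) else 0) := by
          refine Finset.sum_congr rfl fun g hg => ?_
          rw [hA (plus s) hF g ((hmemI g (plus s)).1 hg)]
          by_cases h : g = plus s <;> simp [h]
      _ = MonoidAlgebra.single (plus s * s) k := by
          rw [Finset.sum_ite_eq' ((hfin (plus s)).toFinset) (plus s)
            (fun g => (MonoidAlgebra.single (g * s) k : MonoidAlgebra K S)), if_pos hFmem]
      _ = MonoidAlgebra.single s k := by rw [plus_mul_self]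
  -- right key lemma
  have hkeyR : ∀ (s : S) (k : K), (MonoidAlgebra.single s k : MonoidAlgebra K S) * u = MonoidAlgebra.single s k := by
    intro s k
    have hF : plus (estar s) = estar s := plus_estar s
    have hFmem : estar s ∈ (hfin (estar s)).toFinset := by
      rw [hmemI, hF]
      exact (eh_proj_idem hF).symm
    calc (MonoidAlgebra.single s k : MonoidAlgebra K S) * u
        = ∑ e ∈ hE.toFinset, (MonoidAlgebra.single s k : MonoidAlgebra K S) * (∑ b ∈ (hfin e).toFinset,
            (MonoidAlgebra.single b (μ b e) : MonoidAlgebra K S)) := by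
          rw [hu, Finset.mul_sum]
      _ = ∑ e ∈ hE.toFinset, ∑ b ∈ (hfin e).toFinset,
            (MonoidAlgebra.single (s * b) (k * μ b e) : MonoidAlgebra K S) := by
          refine Finset.sum_congr rfl fun e _ => ?_
          rw [Finset.mul_sum]
          exact Finset.sum_congr rfl fun b _ => MonoidAlgebra.single_mul_single _ _ _ _
      _ = ∑ e ∈ hE.toFinset, ∑ b ∈ (hfin e).toFinset, ∑ g ∈ (hfin (estar s)).toFinset,
            (if b * estar s = g then (MonoidAlgebra.single (s * g) (k * μ b e) : MonoidAlgebra K S)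
              else 0) := by
          refine Finset.sum_congr rfl fun e he => Finset.sum_congr rfl fun b hb => ?_
          rw [Finset.sum_ite_eq ((hfin (estar s)).toFinset) (b * estar s)
            (fun g => (MonoidAlgebra.single (s * g) (k * μ b e) : MonoidAlgebra K S))]
          have hbproj : plus b = b := eh_proj_of_le (hprojE e he) ((hmemI b e).1 hb)
          have hbF : b * estar s ∈ (hfin (estar s)).toFinset := by
            rw [hmemI]
            exact eh_bf_le_f hbproj hF
          rw [if_pos hbF, eh_proj_comm hbproj hF, ← mul_assoc, mul_estar_self]
      _ = ∑ g ∈ (hfin (estar s)).toFinset, ∑ e ∈ hE.toFinset, ∑ b ∈ (hfin e).toFinset,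
            (if b * estar s = g then (MonoidAlgebra.single (s * g) (k * μ b e) : MonoidAlgebra K S)
              else 0) :=
          (Finset.sum_congr rfl fun e _ => Finset.sum_comm).trans Finset.sum_comm
      _ = ∑ g ∈ (hfin (estar s)).toFinset,
            (MonoidAlgebra.single (s * g) (k * (∑ e ∈ hE.toFinset, ∑ b ∈ (hfin e).toFinset,
              (if b * estar s = g then μ b e else 0))) : MonoidAlgebra K S) := by
          refine Finset.sum_congr rfl fun g _ => Eq.symm ?_
          calc (MonoidAlgebra.single (s * g) (k * (∑ e ∈ hE.toFinset, ∑ b ∈ (hfin e).toFinset,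
                (if b * estar s = g then μ b e else 0))) : MonoidAlgebra K S)
              = ∑ e ∈ hE.toFinset, (MonoidAlgebra.single (s * g)
                  (k * (∑ b ∈ (hfin e).toFinset, (if b * estar s = g then μ b e else 0)))
                    : MonoidAlgebra K S) := by
                rw [Finset.mul_sum]
                exact hpush _ _ _
            _ = ∑ e ∈ hE.toFinset, ∑ b ∈ (hfin e).toFinset, (MonoidAlgebra.single (s * g)
                  (k * (if b * estar s = g then μ b e else 0)) : MonoidAlgebra K S) := by
                refine Finset.sum_congr rfl fun e _ => ?_
                rw [Finset.mul_sum]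
                exact hpush _ _ _
            _ = ∑ e ∈ hE.toFinset, ∑ b ∈ (hfin e).toFinset,
                  (if b * estar s = g
                    then (MonoidAlgebra.single (s * g) (k * μ b e) : MonoidAlgebra K S) else 0) := by
                refine Finset.sum_congr rfl fun e _ => Finset.sum_congr rfl fun b _ => ?_
                by_cases h : b * estar s = g <;> simp [h]
      _ = ∑ g ∈ (hfin (estar s)).toFinset,
            (if g = estar s then (MonoidAlgebra.single (s * g) k : MonoidAlgebra K S) else 0) := by
          refine Finset.sum_congr rfl fun g hg => ?_
          rw [hA (estar s) hF g ((hmemI g (estar s)).1 hg)]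
          by_cases h : g = estar s <;> simp [h]
      _ = MonoidAlgebra.single (s * estar s) k := by
          rw [Finset.sum_ite_eq' ((hfin (estar s)).toFinset) (estar s)
            (fun g => (MonoidAlgebra.single (s * g) k : MonoidAlgebra K S)), if_pos hFmem]
      _ = MonoidAlgebra.single s k := by rw [mul_estar_self]
  -- conclude by linearity
  intro w
  constructor
  · induction w using MonoidAlgebra.induction_linear with
    | zero => rw [mul_zero]
    | add f g hf hg => rw [mul_add, hf, hg]
    | single a b => exact hkeyL a b
  · induction w using MonoidAlgebra.induction_linear with
    | zero => rw [zero_mul]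
    | add f g hf hg => rw [add_mul, hf, hg]
    | single a b => exact hkeyR a b
end

section
/- If S = [Y, M_α, φ_{α,β}] is a strong semilattice of monoids with Y a finite semilattice, then the semigroup algebra KS is isomorphic to the direct product Π_{α∈Y} KM_α. -/
/-- The multiplication of a strong semilattice of monoids `S = [Y, M_α, φ_{α,β}]`:
for `a ∈ M_α`, `b ∈ M_β`, `a · b = φ_{α,α⊓β}(a) * φ_{β,α⊓β}(b)` in `M_{α⊓β}`. -/
def strongSemilatticeMul (Y : Type*) [SemilatticeInf Y] (M : Y → Type*)
    [∀ α, Monoid (M α)] (φ : ∀ α β : Y, β ≤ α → (M α →* M β)) :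
    Mul ((α : Y) × M α) :=
  ⟨fun a b => ⟨a.1 ⊓ b.1,
    φ a.1 (a.1 ⊓ b.1) inf_le_left a.2 * φ b.1 (a.1 ⊓ b.1) inf_le_right b.2⟩⟩

open Classical in
/-- Auxiliary: image of a basis element of the semigroup algebra in the product. -/
noncomputable def ssT (Y : Type*) [SemilatticeInf Y] (M : Y → Type*)
    [∀ α, Monoid (M α)] (φ : ∀ α β : Y, β ≤ α → (M α →* M β))
    (K : Type*) [CommRing K] :
    ((α : Y) × M α) → ∀ α, MonoidAlgebra K (M α) :=
  fun s α => if h : α ≤ s.1 then MonoidAlgebra.single (φ s.1 α h s.2) (1 : K) else 0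

/-- Auxiliary: the linear map from the semigroup algebra to the product. -/
noncomputable def ssF (Y : Type*) [SemilatticeInf Y] (M : Y → Type*)
    [∀ α, Monoid (M α)] (φ : ∀ α β : Y, β ≤ α → (M α →* M β))
    (K : Type*) [CommRing K] :
    MonoidAlgebra K ((α : Y) × M α) →ₗ[K] ∀ α, MonoidAlgebra K (M α) :=
  (Finsupp.lsum K fun s => (LinearMap.id : K →ₗ[K] K).smulRight (ssT Y M φ K s)) ∘ₗ
    (MonoidAlgebra.coeffLinearEquiv K).toLinearMap

set_option maxHeartbeats 1000000 in
/-- If `S = [Y, M_α, φ_{α,β}]` is a strong semilattice of monoids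
with `Y` a finite semilattice, then the semigroup algebra `KS` is isomorphic
(as a K-algebra) to the direct product `Π_{α∈Y} K M_α`. -/
theorem strong_semilattice_of_monoids_algebra_iso
    (Y : Type*) [SemilatticeInf Y] [Fintype Y]
    (M : Y → Type*) [∀ α, Monoid (M α)]
    (φ : ∀ α β : Y, β ≤ α → (M α →* M β))
    (hid : ∀ α : Y, φ α α le_rfl = MonoidHom.id (M α))
    (hcomp : ∀ (α β γ : Y) (h1 : β ≤ α) (h2 : γ ≤ β),
      (φ β γ h2).comp (φ α β h1) = φ α γ (h2.trans h1))
    (K : Type*) [CommRing K] :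
    letI : Mul ((α : Y) × M α) := strongSemilatticeMul Y M φ
    ∃ e : MonoidAlgebra K ((α : Y) × M α) ≃+* ((α : Y) → MonoidAlgebra K (M α)),
      ∀ (k : K) (x : MonoidAlgebra K ((α : Y) × M α)), e (k • x) = k • e x := by
  classical
  letI : Mul ((α : Y) × M α) := strongSemilatticeMul Y M φ
  set T := ssT Y M φ K with hTdef
  have hT : ∀ (s : (α : Y) × M α) (α : Y),
      T s α = if h : α ≤ s.1 then MonoidAlgebra.single (φ s.1 α h s.2) (1 : K) else 0 := by
    intro s α
    rw [hTdef]
    unfold ssT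
    by_cases h : α ≤ s.1 <;> simp only [h, dif_pos, dif_neg, not_false_iff]
  have hTmul : ∀ s t : (α : Y) × M α, T (s * t) = T s * T t := by
    intro s t
    funext α
    rw [Pi.mul_apply, hT, hT, hT]
    have h1 : (s * t).1 = s.1 ⊓ t.1 := rfl
    by_cases h : α ≤ s.1 ⊓ t.1
    · have hs : α ≤ s.1 := h.trans inf_le_left
      have ht : α ≤ t.1 := h.trans inf_le_right
      rw [dif_pos (h1 ▸ h : α ≤ (s*t).1), dif_pos hs, dif_pos ht,
        MonoidAlgebra.single_mul_single, one_mul]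
      congr 1
      show φ (s.1 ⊓ t.1) α h
          (φ s.1 (s.1 ⊓ t.1) inf_le_left s.2 * φ t.1 (s.1 ⊓ t.1) inf_le_right t.2) = _
      rw [map_mul]
      congr 1
      · exact DFunLike.congr_fun (hcomp s.1 (s.1 ⊓ t.1) α inf_le_left h) s.2
      · exact DFunLike.congr_fun (hcomp t.1 (s.1 ⊓ t.1) α inf_le_right h) t.2
    · rw [dif_neg (h1 ▸ h : ¬ α ≤ (s*t).1)]
      rcases (not_and_or.mp (fun hh => h (le_inf hh.1 hh.2))) with hs | hs
      · rw [dif_neg hs, zero_mul]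
      · rw [dif_neg hs, mul_zero]
  set F := ssF Y M φ K with hFdef
  have hFapp : ∀ f : MonoidAlgebra K ((α : Y) × M α), F f = f.coeff.sum fun s k => k • T s := by
    intro f
    rw [hFdef]
    show (Finsupp.lsum K fun s => (LinearMap.id : K →ₗ[K] K).smulRight (ssT Y M φ K s)) f.coeff = _
    rw [Finsupp.lsum_apply]
    exact Finsupp.sum_congr fun s _ => rfl
  have hFsingle : ∀ (s : (α : Y) × M α) (k : K), F (MonoidAlgebra.single s k) = k • T s := by
    intro s k
    rw [hFapp]
    exact MonoidAlgebra.sum_single_index (by simp)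
  have hFmul : ∀ x y, F (x * y) = F x * F y := by
    intro x y
    induction x using MonoidAlgebra.induction_linear with
    | zero => rw [zero_mul, map_zero, zero_mul]
    | add f g hf hg => rw [add_mul, map_add, hf, hg, map_add, add_mul]
    | single s k =>
      induction y using MonoidAlgebra.induction_linear with
      | zero => rw [mul_zero, map_zero, mul_zero]
      | add f g hf hg => rw [mul_add, map_add, hf, hg, map_add, mul_add]
      | single t l =>
        show F (MonoidAlgebra.single s k * MonoidAlgebra.single t l)
          = F (MonoidAlgebra.single s k) * F (MonoidAlgebra.single t l)
        rw [MonoidAlgebra.single_mul_single, hFsingle, hFsingle, hFsingle, hTmul,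
          smul_mul_smul_comm]
  -- injectivity
  have hinj : Function.Injective F := by
    rw [injective_iff_map_eq_zero]
    intro f hf
    by_contra hne
    have hsupp : f.coeff.support.Nonempty :=
      Finsupp.support_nonempty_iff.mpr (fun h => hne (MonoidAlgebra.coeff_eq_zero.mp h))
    obtain ⟨s0, hs0, hmax⟩ := Set.Finite.exists_maximalFor Sigma.fst
      (f.coeff.support : Set ((α : Y) × M α)) (f.coeff.support.finite_toSet)
      (by exact_mod_cast hsupp)
    obtain ⟨β, m⟩ := s0
    simp only [Finset.mem_coe] at hs0
    have hval : (F f β).coeff m = f.coeff ⟨β, m⟩ := by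
      rw [hFapp, Finsupp.sum, Finset.sum_apply, MonoidAlgebra.coeff_sum,
        Finsupp.finset_sum_apply]
      rw [Finset.sum_eq_single_of_mem ⟨β, m⟩ hs0]
      · rw [Pi.smul_apply, MonoidAlgebra.coeff_smul, Finsupp.smul_apply, hT, dif_pos (le_refl β)]
        have h1 : φ β β (le_refl β) m = m := DFunLike.congr_fun (hid β) m
        rw [h1, MonoidAlgebra.single_apply, if_pos rfl, smul_eq_mul, mul_one]
      · rintro ⟨s1, s2⟩ hs hne2
        rw [Pi.smul_apply, MonoidAlgebra.coeff_smul, Finsupp.smul_apply, hT]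
        by_cases h : β ≤ s1
        · have hs1β : s1 = β := le_antisymm (hmax (j := ⟨s1, s2⟩) (Finset.mem_coe.mpr hs) h) h
          subst hs1β
          have h2 : φ s1 s1 h s2 = s2 := DFunLike.congr_fun (hid s1) s2
          rw [dif_pos h, h2, MonoidAlgebra.single_apply, if_neg, smul_zero]
          intro hcon
          exact hne2 (by cases hcon; rfl)
        · rw [dif_neg h, MonoidAlgebra.coeff_zero, Finsupp.zero_apply, smul_zero]
    rw [hf] at hval
    exact Finsupp.mem_support_iff.mp hs0 (by simpa using hval.symm)
  -- range is everything
  have hkey : ∀ β : Y, ∀ v : MonoidAlgebra K (M β),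
      Pi.single β v ∈ LinearMap.range F := by
    intro β
    induction β using WellFoundedLT.induction with
    | _ β IH =>
      intro v
      set f0 : MonoidAlgebra K ((α : Y) × M α) :=
        v.coeff.sum fun m k => MonoidAlgebra.single ⟨β, m⟩ k with hf0
      have hFf0 : F f0 = v.coeff.sum fun m k => k • T ⟨β, m⟩ := by
        rw [hf0, map_finsuppSum]
        exact Finsupp.sum_congr fun m _ => hFsingle _ _
      have hβ : F f0 β = v := by
        rw [hFf0, Finsupp.sum, Finset.sum_apply]
        rw [Finset.sum_congr rfl (g := fun m => MonoidAlgebra.single m (v.coeff m)) ?_]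
        · exact MonoidAlgebra.sum_coeff_single v
        · intro m _
          rw [Pi.smul_apply, hT, dif_pos (le_refl β)]
          have h1 : φ β β (le_refl β) m = m := DFunLike.congr_fun (hid β) m
          rw [h1, MonoidAlgebra.smul_single', mul_one]
      have hnotle : ∀ α : Y, ¬ α ≤ β → F f0 α = 0 := by
        intro α hα
        rw [hFf0, Finsupp.sum, Finset.sum_apply]
        apply Finset.sum_eq_zero
        intro m _
        rw [Pi.smul_apply, hT, dif_neg hα, smul_zero]
      have hrange : ∀ w : ∀ α, MonoidAlgebra K (M α), (∀ α, w α ≠ 0 → α < β) →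
          w ∈ LinearMap.range F := by
        intro w hw
        rw [← Finset.univ_sum_single w]
        apply Submodule.sum_mem
        intro α _
        by_cases hα : w α = 0
        · rw [hα, Pi.single_zero]; exact Submodule.zero_mem _
        · exact IH α (hw α hα) _
      have hgmem : F f0 - Pi.single β v ∈ LinearMap.range F := by
        apply hrange
        intro α hα
        by_cases hle : α ≤ β
        · rcases eq_or_lt_of_le hle with rfl | h
          · exact absurd (by rw [Pi.sub_apply, hβ, Pi.single_eq_same, sub_self]) hα
          · exact h
        · exact absurd (by
            have hne : α ≠ β := fun hh => hle (le_of_eq hh)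
            simp [Pi.sub_apply, hnotle α hle, Pi.single_eq_of_ne hne]) hα
      have hrw : Pi.single β v = F f0 - (F f0 - Pi.single β v) := (sub_sub_cancel _ _).symm
      rw [hrw]
      exact Submodule.sub_mem _ (LinearMap.mem_range_self F f0) hgmem
  have hsurj : Function.Surjective F := by
    intro w
    have hmem : w ∈ LinearMap.range F := by
      rw [← Finset.univ_sum_single w]
      exact Submodule.sum_mem _ fun α _ => hkey α (w α)
    exact hmem
  refine ⟨{ Equiv.ofBijective F ⟨hinj, hsurj⟩ with
            map_mul' := hFmul, map_add' := map_add F }, ?_⟩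
  intro k x
  exact map_smul F k x
end

section
/- Let S be an E-Ehresmann semigroup and C its associated Ehresmann category. A morphism C(a) is invertible in C if and only if a is Green's R-related to a⁺ and Green's L-related to a*. -/
open EhresmannSemigroup

/-- The distinguished semilattice `E` of an `E`-Ehresmann semigroup. -/
def eE (S : Type*) [EhresmannSemigroup S] : Set S := Set.range (plus : S → S)

/-- The partial order `≤_r` : `a ≤_r b` iff `a = a⁺ b`. -/
def leR {S : Type*} [EhresmannSemigroup S] (a b : S) : Prop := a = plus a * b

/-- The partial order `≤_l` : `a ≤_l b` iff `a = b a*`. -/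
def leL {S : Type*} [EhresmannSemigroup S] (a b : S) : Prop := a = b * estar a

/-- Green's `R` relation on a semigroup. -/
def rRel {S : Type*} [Semigroup S] (a b : S) : Prop :=
  (a = b ∨ ∃ x, a * x = b) ∧ (b = a ∨ ∃ x, b * x = a)

/-- Green's `L` relation on a semigroup. -/
def lRel {S : Type*} [Semigroup S] (a b : S) : Prop :=
  (a = b ∨ ∃ x, x * a = b) ∧ (b = a ∨ ∃ x, x * b = a)

/-- Green's `D` relation on a semigroup. -/
def dRel {S : Type*} [Semigroup S] (a b : S) : Prop := ∃ c, rRel a c ∧ lRel c b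

/-- The set `Reg_E(S)` of elements corresponding to invertible morphisms. -/
def regE (S : Type*) [EhresmannSemigroup S] : Set S :=
  {a | rRel a (plus a) ∧ lRel a (estar a)}

/-- `C(a)` is an invertible morphism of the associated Ehresmann category. -/
def invertibleC {S : Type*} [EhresmannSemigroup S] (a : S) : Prop :=
  ∃ b, plus b = estar a ∧ estar b = plus a ∧ a * b = plus a ∧ b * a = estar a

/-- In an E-Ehresmann semigroup `S` with associated Ehresmann
category `C`, the morphism `C(a)` is invertible in `C` iff `a` is Green's
`R`-related to `a⁺` and Green's `L`-related to `a*`. -/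
theorem morphism_invertible_iff (S : Type*) [EhresmannSemigroup S] (a : S) :
    invertibleC a ↔ rRel a (EhresmannSemigroup.plus a) ∧ lRel a (EhresmannSemigroup.estar a) := by
  have plus_idem : ∀ x : S, plus x * plus x = plus x := fun x => by
    have := mul_estar_self (plus x); rwa [estar_plus] at this
  have estar_idem : ∀ x : S, estar x * estar x = estar x := fun x => by
    have := plus_mul_self (estar x); rwa [plus_estar] at this
  have plus_plus : ∀ x : S, plus (plus x) = plus x := fun x => by
    have := plus_prod_idem x x; rwa [plus_idem] at this
  have estar_estar : ∀ x : S, estar (estar x) = estar x := fun x => by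
    have := estar_prod_idem x x; rwa [estar_idem] at this
  constructor
  · rintro ⟨b, _, _, hab, hba⟩
    exact ⟨⟨Or.inr ⟨b, hab⟩, Or.inr ⟨a, plus_mul_self a⟩⟩,
           ⟨Or.inr ⟨b, hba⟩, Or.inr ⟨a, mul_estar_self a⟩⟩⟩
  · rintro ⟨⟨hu, -⟩, ⟨hv, -⟩⟩
    -- obtain u with a * u = plus a
    obtain ⟨u, hu⟩ : ∃ u, a * u = plus a := by
      rcases hu with h | h
      · exact ⟨a, by rw [h, plus_idem, plus_plus]⟩
      · exact h
    obtain ⟨v, hv⟩ : ∃ v, v * a = estar a := by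
      rcases hv with h | h
      · exact ⟨a, by rw [h, estar_idem, estar_estar]⟩
      · exact h
    set b := estar a * v * a * u * plus a with hb
    have hab : a * b = plus a := by
      calc a * b = a * estar a * v * a * u * plus a := by
            simp only [hb, ← mul_assoc]
        _ = a * (v * a) * u * plus a := by rw [mul_estar_self, mul_assoc a v a]
        _ = a * u * plus a := by rw [hv, mul_estar_self]
        _ = plus a := by rw [hu, plus_idem]
    have hba : b * a = estar a := by
      calc b * a = estar a * v * (a * u * plus a * a) := by
            simp only [hb, mul_assoc]
        _ = estar a * v * a := by rw [hu, plus_idem, plus_mul_self]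
        _ = estar a * estar a := by rw [mul_assoc, hv]
        _ = estar a := estar_idem a
    refine ⟨b, ?_, ?_, hab, hba⟩
    · -- plus b = estar a
      have h1 : estar a * plus b = plus b := by
        have := plus_absorb (estar a) (v * a * u * plus a)
        rw [plus_estar] at this
        simpa only [hb, mul_assoc] using this
      have h2 : plus b * estar a = estar a := by
        have := plus_absorb b a
        rwa [hba, plus_estar] at this
      have hc : plus b * estar a = estar a * plus b := by
        have := plus_comm b (estar a)
        rwa [plus_estar] at this
      rw [← h1, ← hc, h2]
    · -- estar b = plus a
      have h1 : estar b * plus a = estar b := by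
        have := estar_absorb (estar a * v * a * u) (plus a)
        rwa [estar_plus, ← hb] at this
      have h2 : plus a * estar b = plus a := by
        have := estar_absorb a b
        rwa [hab, estar_plus] at this
      have hc : plus a * estar b = estar b * plus a := by
        have := estar_comm (plus a) b
        rwa [estar_plus] at this
      rw [← h1, ← hc, h2]
end

section
/- Let S be an E-Ehresmann semigroup and C its associated category. Two objects C(e), C(f) (e, f ∈ E) are isomorphic in C if and only if e and f are Green's D-related in S. -/
open EhresmannSemigroup

open EhresmannSemigroup

section Aux
variable {S : Type*} [EhresmannSemigroup S]

lemma plus_idem' (x : S) : plus x * plus x = plus x := by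
  have h := plus_absorb x (estar x)
  rwa [mul_estar_self] at h

lemma plus_plus' (x : S) : plus (plus x : S) = plus x := by
  have h := plus_prod_idem x x
  rwa [plus_idem'] at h

lemma estar_idem' (x : S) : estar x * estar x = estar x := by
  have h := estar_absorb (plus x) x
  rwa [plus_mul_self] at h

lemma estar_estar' (x : S) : estar (estar x : S) = estar x := by
  have h := estar_prod_idem x x
  rwa [estar_idem'] at h

lemma plus_eq_of_rRel' {a b : S} (h : rRel a b) : plus a = plus b := by
  obtain ⟨h1, h2⟩ := h
  have le1 : plus a * plus b = plus b := by
    rcases h1 with rfl | ⟨x, hx⟩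
    · exact plus_idem' a
    · rw [← hx]; exact plus_absorb a x
  have le2 : plus b * plus a = plus a := by
    rcases h2 with rfl | ⟨x, hx⟩
    · exact plus_idem' b
    · rw [← hx]; exact plus_absorb b x
  calc plus a = plus b * plus a := le2.symm
    _ = plus a * plus b := plus_comm ..
    _ = plus b := le1

lemma estar_eq_of_lRel' {a b : S} (h : lRel a b) : estar a = estar b := by
  obtain ⟨h1, h2⟩ := h
  have le1 : estar b * estar a = estar b := by
    rcases h1 with rfl | ⟨x, hx⟩
    · exact estar_idem' a
    · rw [← hx]; exact estar_absorb x a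
  have le2 : estar a * estar b = estar a := by
    rcases h2 with rfl | ⟨x, hx⟩
    · exact estar_idem' b
    · rw [← hx]; exact estar_absorb x b
  calc estar a = estar a * estar b := le2.symm
    _ = estar b * estar a := estar_comm ..
    _ = estar b := le1

end Aux

/-- Two objects `C(e)`, `C(f)` (`e, f ∈ E`) of the associated
Ehresmann category are isomorphic iff `e` and `f` are Green's `D`-related in `S`.
(An isomorphism from `C(e)` to `C(f)` is an invertible morphism `C(a)` with
`a⁺ = e` and `a* = f`.) -/
theorem objects_isomorphic_iff_dRel (S : Type*) [EhresmannSemigroup S]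
    (e f : S) (he : e ∈ eE S) (hf : f ∈ eE S) :
    (∃ a : S, plus a = e ∧ estar a = f ∧ invertibleC a) ↔ dRel e f := by
  obtain ⟨w, hw⟩ := he
  obtain ⟨v, hv⟩ := hf
  have hpe : plus e = e := by rw [← hw, plus_plus']
  have hee : estar e = e := by rw [← hw, estar_plus]
  have hpf : plus f = f := by rw [← hv, plus_plus']
  have hef : estar f = f := by rw [← hv, estar_plus]
  constructor
  · rintro ⟨a, hpa, hea, b, hpb, heb, hab, hba⟩
    refine ⟨a, ⟨Or.inr ⟨a, ?_⟩, Or.inr ⟨b, ?_⟩⟩, Or.inr ⟨b, ?_⟩, Or.inr ⟨a, ?_⟩⟩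
    · rw [← hpa, plus_mul_self]
    · rw [hab, hpa]
    · rw [hba, hea]
    · rw [← hea, mul_estar_self]
  · rintro ⟨c, hR, hL⟩
    have hpc : plus c = e := by rw [← plus_eq_of_rRel' hR, hpe]
    have hec : estar c = f := by rw [estar_eq_of_lRel' hL, hef]
    -- get y with c * y = e
    obtain ⟨y, hy⟩ : ∃ y, c * y = e := by
      rcases hR.2 with h | h
      · exact ⟨estar c, by rw [mul_estar_self, h]⟩
      · exact h
    -- get u with u * c = f
    obtain ⟨u, hu⟩ : ∃ u, u * c = f := by
      rcases hL.1 with h | h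
      · exact ⟨plus c, by rw [plus_mul_self, ← h]⟩
      · exact h
    set b := f * y with hb
    have hcf : c * f = c := by rw [← hec, mul_estar_self]
    have hec' : e * c = c := by rw [← hpc, plus_mul_self]
    have hcb : c * b = e := by rw [hb, ← mul_assoc, hcf, hy]
    have hcyc : c * y * c = c := by rw [hy, hec']
    have hbc : b * c = f := by
      rw [hb, ← hu, mul_assoc u c y, mul_assoc, mul_assoc, ← mul_assoc c y c, hcyc]
    have hff : f * f = f := by rw [← hec, estar_idem']
    have hfb : f * b = b := by rw [hb, ← mul_assoc, hff]
    have hbe : b * e = b := by rw [← hcb, ← mul_assoc, hbc, hfb]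
    -- plus b = f
    have hpbf : plus b = f := by
      have le1 : plus f * plus b = plus b := by
        have := plus_absorb f y; rwa [← hb] at this
      have le2 : plus b * plus f = plus f := by
        have := plus_absorb b c; rwa [hbc] at this
      rw [hpf] at le1 le2
      calc plus b = f * plus b := le1.symm
        _ = plus f * plus b := by rw [hpf]
        _ = plus b * plus f := plus_comm ..
        _ = plus b * f := by rw [hpf]
        _ = f := by rw [← hpf] at le2 ⊢; exact le2
    -- estar b = e
    have hebe : estar b = e := by
      have le1 : e * estar b = e := by
        have := estar_absorb c b; rwa [hcb, hee] at this
      have le2 : estar b * e = estar b := by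
        have := estar_absorb b e; rwa [hbe, hee] at this
      calc estar b = estar b * e := le2.symm
        _ = estar b * estar e := by rw [hee]
        _ = estar e * estar b := estar_comm ..
        _ = e * estar b := by rw [hee]
        _ = e := le1
    exact ⟨c, hpc, hec, b, by rw [hpbf, hec], by rw [hebe, hpc], by rw [hcb, hpc],
      by rw [hbc, hec]⟩
end

section
/- Let S be an E-Ehresmann semigroup whose associated category C is an EI-category (every endomorphism is an isomorphism). Then E is a maximal semilattice in S: no idempotent f ∈ E(S)\E commutes with all elements of E while E ∪ {f} remains a semilattice. -/
open EhresmannSemigroup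

open EhresmannSemigroup

/-- If the Ehresmann category `C` associated to an E-Ehresmann
semigroup `S` is an EI-category (every endomorphism is an isomorphism, i.e.
every `a` with `a⁺ = a*` lies in `Reg_E(S)`), then `E` is a maximal semilattice
in `S`: no idempotent `f ∈ E(S) \ E` commutes with every element of `E`. -/
theorem EI_implies_maximal_semilattice (S : Type*) [EhresmannSemigroup S]
    (hEI : ∀ a : S, plus a = estar a → a ∈ regE S) :
    ¬ ∃ f : S, f * f = f ∧ f ∉ eE S ∧ ∀ e ∈ eE S, e * f = f * e := by
  rintro ⟨f, hff, hfE, hcomm⟩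
  have hplusE : plus f ∈ eE S := ⟨f, rfl⟩
  -- f * plus f = f
  have h1 : f * plus f = f := by
    rw [← hcomm _ hplusE, plus_mul_self]
  -- estar f * plus f = plus f
  have h2 : estar f * plus f = plus f := by
    have hsf : estar f * f = f := by
      rw [hcomm _ ⟨estar f, plus_estar f⟩, mul_estar_self]
    have := plus_absorb (estar f) f
    rwa [plus_estar, hsf] at this
  -- estar f * plus f = estar f
  have h3 : estar f * plus f = estar f := by
    have := estar_absorb f (plus f)
    rwa [h1, estar_plus] at this
  have heq : plus f = estar f := by rw [← h2, h3]
  obtain ⟨hR, -⟩ := hEI f heq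
  obtain ⟨hR1, -⟩ := hR
  apply hfE
  rcases hR1 with h | ⟨x, hx⟩
  · exact ⟨f, h.symm⟩
  · refine ⟨f, ?_⟩
    calc plus f = f * x := hx.symm
    _ = (f * f) * x := by rw [hff]
    _ = f * (f * x) := by rw [mul_assoc]
    _ = f * plus f := by rw [hx]
    _ = f := h1
end

section
/- Let S be a finite E(S)-Ehresmann semigroup (i.e., E-Ehresmann with E = E(S)). Then the associated Ehresmann category C is an EI-category: every endomorphism monoid in C is a group. -/
open EhresmannSemigroup

open EhresmannSemigroup

/-- In a finite semigroup, a "power sequence" contains an idempotent. -/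
lemma exists_idem_aux {S : Type*} [Semigroup S] [Finite S] (f : ℕ → S)
    (hf : ∀ m n, f m * f n = f (m + n + 1)) : ∃ n, f n * f n = f n := by
  obtain ⟨i, j, hne, he⟩ := Finite.exists_ne_map_eq_of_infinite f
  -- shift lemma
  have hshift : ∀ s m m', f m = f m' → f (m + s) = f (m' + s) := by
    intro s m m' hmm
    cases s with
    | zero => simpa using hmm
    | succ s =>
      calc f (m + (s + 1)) = f m * f s := (hf m s).symm
        _ = f m' * f s := by rw [hmm]
        _ = f (m' + (s + 1)) := hf m' s
  -- reduce to i < j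
  obtain ⟨i, d, hd⟩ : ∃ i d, f i = f (i + (d + 1)) := by
    rcases Nat.lt_or_ge i j with hij | hij
    · exact ⟨i, j - i - 1, by rw [he]; congr 1; omega⟩
    · have hij' : j < i := lt_of_le_of_ne hij (Ne.symm hne)
      exact ⟨j, i - j - 1, by rw [← he]; congr 1; omega⟩
  -- periodicity
  have hper : ∀ t, f (i + t * (d + 1)) = f i := by
    intro t
    induction t with
    | zero => simp
    | succ t ih =>
      have h1 := hshift (d + 1) _ _ ih
      have h2 : i + (t + 1) * (d + 1) = i + t * (d + 1) + (d + 1) := by ring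
      rw [h2, h1, ← hd]
  -- the idempotent power
  refine ⟨i + (i + 1) * d, ?_⟩
  set s : ℕ := (i + 1) * d with hs
  have key : f (i + s) * f (i + s) = f (i + (i + 1) * (d + 1) + s) := by
    rw [hf]; congr 1; ring
  rw [key, hshift s _ _ (hper (i + 1))]

/-- Let `S` be a finite `E(S)`-Ehresmann semigroup, i.e. an
E-Ehresmann semigroup with `E = E(S)`.  Then the associated Ehresmann category
is an EI-category: every endomorphism (`a` with `a⁺ = a*`) is an isomorphism. -/
theorem finite_ES_Ehresmann_is_EI (S : Type*) [EhresmannSemigroup S] [Fintype S]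
    (hE : eE S = {e : S | e * e = e}) :
    ∀ a : S, plus a = estar a → invertibleC a := by
  intro a h
  -- basic consequences of the axioms
  have plus_plus : ∀ x : S, plus (plus x) = plus x := by
    intro x
    have h1 := plus_estar (plus x)
    rwa [estar_plus] at h1
  have ea : plus a * a = a := plus_mul_self a
  have ae : a * plus a = a := by rw [h]; exact mul_estar_self a
  -- the power sequence f n = a^(n+1)
  let f : ℕ → S := fun n => Nat.rec a (fun _ x => x * a) n
  have f0 : f 0 = a := rfl
  have fsucc : ∀ n, f (n + 1) = f n * a := fun n => rfl
  have hpe : ∀ n, plus (f n) = plus a ∧ estar (f n) = plus a := by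
    intro n
    induction n with
    | zero => exact ⟨rfl, h.symm⟩
    | succ n ih =>
      constructor
      · have hfe : f n * plus a = f n := by rw [← ih.2]; exact mul_estar_self _
        rw [fsucc, plus_mul_plus, hfe, ih.1]
      · rw [fsucc, estar_mul_estar, ih.2, ea, ← h]
  have hf : ∀ m n, f m * f n = f (m + n + 1) := by
    intro m n
    induction n with
    | zero => rfl
    | succ n ih =>
      calc f m * f (n + 1) = f m * f n * a := by rw [fsucc, mul_assoc]
        _ = f (m + n + 1) * a := by rw [ih]
        _ = f (m + (n + 1) + 1) := rfl
  obtain ⟨n, hn⟩ := exists_idem_aux f hf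
  -- the idempotent power lies in E, hence is fixed by plus, hence equals plus a
  have hmem : f n ∈ eE S := by rw [hE]; exact hn
  obtain ⟨y, hy⟩ := hmem
  have hfix : plus (f n) = f n := by rw [← hy, plus_plus]
  have hfn : f n = plus a := by rw [← hfix, (hpe n).1]
  refine ⟨f (n + n), (hpe _).1.trans h, (hpe _).2, ?_, ?_⟩
  · have h0 := hf 0 (n + n)
    rw [f0, Nat.zero_add] at h0
    rw [h0, ← hf n n, hn, hfn]
  · have h1 := hf (n + n) 0
    rw [f0, Nat.add_zero] at h1
    rw [h1, ← hf n n, hn, hfn, h]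
end

section
/- Let S be an E-Ehresmann semigroup. The set Reg_E(S) = {a ∈ S : a R a⁺ and a L a*} (Green's relations) is an inverse subsemigroup of S whose set of idempotents is exactly E. -/
open EhresmannSemigroup

open EhresmannSemigroup

namespace EhrAux
open EhresmannSemigroup
variable {S : Type*} [EhresmannSemigroup S]

lemma pi (x : S) : plus x * plus x = plus x := by
  have h := plus_absorb x (estar x)
  rwa [mul_estar_self] at h

lemma pp (x : S) : plus (plus x) = plus x := by
  have h := plus_prod_idem x x
  rwa [pi] at h

lemma si (x : S) : estar x * estar x = estar x := by
  have h := estar_absorb (plus x) x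
  rwa [plus_mul_self] at h

lemma ss (x : S) : estar (estar x) = estar x := by
  have h := estar_prod_idem x x
  rwa [si] at h

lemma ecomm {e f : S} (he : plus e = e) (hf : plus f = f) : e * f = f * e := by
  rw [← he, ← hf]; exact plus_comm e f

lemma emul {e f : S} (he : plus e = e) (hf : plus f = f) : plus (e * f) = e * f := by
  conv_lhs => rw [← he, ← hf]
  rw [plus_prod_idem, he, hf]

lemma mk_invertible {a B0 : S} (h1 : a * B0 = plus a) (h2 : B0 * a = estar a) :
    invertibleC a := by
  set B := estar a * (B0 * plus a) with hB
  have g1 : a * B = plus a := by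
    rw [hB, ← mul_assoc, mul_estar_self, ← mul_assoc, h1, pi]
  have g2 : B * a = estar a := by
    rw [hB, mul_assoc, mul_assoc, plus_mul_self, h2, si]
  refine ⟨B, ?_, ?_, g1, g2⟩
  · have e1 : estar a * plus B = plus B := by
      have h := plus_absorb (estar a) (B0 * plus a)
      rw [plus_estar] at h
      exact h
    have e2 : plus B * estar a = estar a := by
      have h := plus_absorb B a
      rwa [g2, plus_estar] at h
    calc plus B = estar a * plus B := e1.symm
      _ = plus B * estar a := ecomm (plus_estar a) (pp B)
      _ = estar a := e2
  · have e1 : estar B * plus a = estar B := by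
      have h := estar_absorb (estar a * B0) (plus a)
      rw [estar_plus, mul_assoc] at h
      exact h
    have e2 : plus a * estar B = plus a := by
      have h := estar_absorb a B
      rwa [g1, estar_plus] at h
    calc estar B = estar B * plus a := e1.symm
      _ = plus a * estar B := ecomm (plus_estar B) (pp a)
      _ = plus a := e2

lemma regE_invertible {a : S} (ha : a ∈ regE S) : invertibleC a := by
  obtain ⟨⟨hr, -⟩, ⟨hl, -⟩⟩ := ha
  obtain ⟨x, hx⟩ : ∃ x, a * x = plus a := by
    rcases hr with h | h
    · exact ⟨estar a, by rw [mul_estar_self, ← h]⟩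
    · exact h
  obtain ⟨y, hy⟩ : ∃ y, y * a = estar a := by
    rcases hl with h | h
    · exact ⟨plus a, by rw [plus_mul_self, ← h]⟩
    · exact h
  have h1 : a * (y * (a * x)) = plus a := by
    rw [← mul_assoc, ← mul_assoc, mul_assoc a y a, hy, mul_estar_self, hx]
  have h2 : (y * (a * x)) * a = estar a := by
    rw [mul_assoc, hx, plus_mul_self, hy]
  exact mk_invertible h1 h2


lemma invertible_mem {a : S} (h : invertibleC a) : a ∈ regE S := by
  obtain ⟨b, -, -, hab, hba⟩ := h
  exact ⟨⟨Or.inr ⟨b, hab⟩, Or.inr ⟨a, plus_mul_self a⟩⟩,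
    ⟨Or.inr ⟨b, hba⟩, Or.inr ⟨a, mul_estar_self a⟩⟩⟩

/-- Key conjugation lemma (left version). -/
lemma L1 {a b : S} (hab : a * b = plus a) (hba : b * a = estar a)
    {f : S} (hf : plus f = f) :
    a * f * (b * plus (a * f)) = plus (a * f) := by
  -- replace f by f' = estar a * f
  set f' := estar a * f with hf'def
  have hff' : plus f' = f' := emul (plus_estar a) hf
  have haf : a * f' = a * f := by
    rw [hf'def, ← mul_assoc, mul_estar_self]
  have key : plus (b * plus (a * f')) = f' := by
    calc plus (b * plus (a * f')) = plus (b * (a * f')) := (plus_mul_plus b (a * f')).symm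
      _ = plus (b * a * f') := by rw [mul_assoc]
      _ = plus (estar a * f') := by rw [hba]
      _ = plus (estar a * (estar a * f)) := by rw [hf'def]
      _ = plus (estar a * estar a * f) := by rw [mul_assoc]
      _ = plus f' := by rw [si, hf'def]
      _ = f' := hff'
  have hfbp : f' * (b * plus (a * f')) = b * plus (a * f') := by
    set u := b * plus (a * f') with hu
    rw [← key]
    exact plus_mul_self u
  have main : a * f' * (b * plus (a * f')) = plus (a * f') := by
    calc a * f' * (b * plus (a * f'))
        = a * (f' * (b * plus (a * f'))) := by rw [mul_assoc]
      _ = a * (b * plus (a * f')) := by rw [hfbp]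
      _ = a * b * plus (a * f') := by rw [mul_assoc]
      _ = plus a * plus (a * f') := by rw [hab]
      _ = plus (a * f') := plus_absorb a f'
  rwa [haf] at main

/-- Key conjugation lemma (right version). -/
lemma L2 {c d : S} (hcd : c * d = plus c) (hdc : d * c = estar c)
    {f : S} (hf : estar f = f) :
    estar (f * c) * (d * (f * c)) = estar (f * c) := by
  have hpf : plus f = f := by rw [← hf, plus_estar, hf]
  set f' := f * plus c with hf'def
  have hpf' : plus f' = f' := emul hpf (pp c)
  have hsf' : estar f' = f' := by rw [← hpf', estar_plus, hpf']
  have hfc : f' * c = f * c := by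
    rw [hf'def, mul_assoc, plus_mul_self]
  have key : estar (estar (f' * c) * d) = f' := by
    calc estar (estar (f' * c) * d) = estar (f' * c * d) := (estar_mul_estar (f' * c) d).symm
      _ = estar (f' * (c * d)) := by rw [mul_assoc]
      _ = estar (f' * plus c) := by rw [hcd]
      _ = estar (f * (plus c * plus c)) := by rw [hf'def, mul_assoc]
      _ = estar f' := by rw [pi, hf'def]
      _ = f' := hsf'
  have hq : estar (f' * c) * d * f' = estar (f' * c) * d := by
    set w := estar (f' * c) * d with hw
    rw [← key]
    exact mul_estar_self w
  have main : estar (f' * c) * (d * (f' * c)) = estar (f' * c) := by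
    calc estar (f' * c) * (d * (f' * c))
        = estar (f' * c) * d * (f' * c) := (mul_assoc (estar (f' * c)) d (f' * c)).symm
      _ = estar (f' * c) * d * f' * c := by rw [mul_assoc (estar (f' * c) * d) f' c]
      _ = estar (f' * c) * d * c := by rw [hq]
      _ = estar (f' * c) * (d * c) := by rw [mul_assoc]
      _ = estar (f' * c) * estar c := by rw [hdc]
      _ = estar (f' * c) := estar_absorb f' c
  rwa [hfc] at main

lemma mul_mem {a c : S} (ha : a ∈ regE S) (hc : c ∈ regE S) : a * c ∈ regE S := by
  obtain ⟨b, hpb, hsb, hab, hba⟩ := regE_invertible ha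
  obtain ⟨d, hpd, hsd, hcd, hdc⟩ := regE_invertible hc
  have hpac : plus (a * c) = plus (a * plus c) := plus_mul_plus a c
  have hsac : estar (a * c) = estar (estar a * c) := estar_mul_estar a c
  refine ⟨⟨Or.inr ⟨d * (b * plus (a * c)), ?_⟩, Or.inr ⟨a * c, plus_mul_self _⟩⟩,
    ⟨Or.inr ⟨estar (a * c) * (d * b), ?_⟩, Or.inr ⟨a * c, mul_estar_self _⟩⟩⟩
  · calc a * c * (d * (b * plus (a * c)))
        = a * c * d * (b * plus (a * c)) := (mul_assoc (a * c) d (b * plus (a * c))).symm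
      _ = a * (c * d) * (b * plus (a * c)) := by rw [mul_assoc a c d]
      _ = a * plus c * (b * plus (a * plus c)) := by rw [hcd, hpac]
      _ = plus (a * plus c) := L1 hab hba (pp c)
      _ = plus (a * c) := hpac.symm
  · calc estar (a * c) * (d * b) * (a * c)
        = estar (a * c) * (d * b * (a * c)) := by rw [mul_assoc]
      _ = estar (a * c) * (d * (b * (a * c))) := by rw [mul_assoc d b (a * c)]
      _ = estar (a * c) * (d * (b * a * c)) := by rw [mul_assoc b a c]
      _ = estar (estar a * c) * (d * (estar a * c)) := by rw [hba, hsac]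
      _ = estar (estar a * c) := L2 hcd hdc (ss a)
      _ = estar (a * c) := hsac.symm

lemma idem_mem_E {a : S} (ha : a ∈ regE S) (hi : a * a = a) : a ∈ eE S := by
  obtain ⟨b, hpb, hsb, hab, hba⟩ := regE_invertible ha
  have h1 : a * plus a = plus a := by rw [← hab, ← mul_assoc, hi]
  have h2 : estar a * a = estar a := by rw [← hba, mul_assoc, hi]
  have hg : plus (plus a * estar a) = plus a * estar a := emul (pp a) (plus_estar a)
  have hga : plus a * estar a * a = plus a * estar a := by rw [mul_assoc, h2]
  have hag : a * (plus a * estar a) = plus a * estar a := by rw [← mul_assoc, h1]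
  have key : a = plus a * estar a := by
    calc a = a * a := hi.symm
      _ = (a * estar a) * (plus a * a) := by rw [mul_estar_self, plus_mul_self]
      _ = a * (estar a * (plus a * a)) := by rw [mul_assoc]
      _ = a * (estar a * plus a * a) := by rw [mul_assoc (estar a) (plus a) a]
      _ = a * (plus a * estar a * a) := by rw [ecomm (plus_estar a) (pp a)]
      _ = a * (plus a * estar a) := by rw [hga]
      _ = plus a * estar a := hag
  exact ⟨plus a * estar a, hg.trans key.symm⟩

lemma E_mem (w : S) : plus w ∈ regE S ∧ plus w * plus w = plus w := by
  refine ⟨⟨⟨Or.inl (pp w).symm, Or.inl (pp w)⟩,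
    ⟨Or.inl (estar_plus w).symm, Or.inl (estar_plus w)⟩⟩, pi w⟩

end EhrAux

/-- In an E-Ehresmann semigroup `S`, the set
`Reg_E(S) = {a | a R a⁺ and a L a*}` is an inverse subsemigroup of `S`
(closed under multiplication, every element has a unique inverse lying in
`Reg_E(S)`) whose set of idempotents is exactly `E`. -/
theorem regE_inverse_subsemigroup (S : Type*) [EhresmannSemigroup S] :
    (∀ a ∈ regE S, ∀ b ∈ regE S, a * b ∈ regE S) ∧
    (∀ a ∈ regE S, ∃! b : S, b ∈ regE S ∧ a * b * a = a ∧ b * a * b = b) ∧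
    {a | a ∈ regE S ∧ a * a = a} = eE S := by
  refine ⟨fun a ha b hb => EhrAux.mul_mem ha hb, ?_, ?_⟩
  · intro a ha
    obtain ⟨b, hpb, hsb, hab, hba⟩ := EhrAux.regE_invertible ha
    have hbreg : b ∈ regE S :=
      EhrAux.invertible_mem ⟨a, hsb.symm, hpb.symm, hba.trans hpb.symm, hab.trans hsb.symm⟩
    have haba : a * b * a = a := by rw [hab, plus_mul_self]
    have hbab : b * a * b = b := by rw [hba, ← hpb, plus_mul_self]
    refine ⟨b, ⟨hbreg, haba, hbab⟩, ?_⟩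
    rintro c ⟨hcreg, haca, hcac⟩
    have hacI : (a * c) * (a * c) = a * c := by
      rw [mul_assoc, ← mul_assoc c a c, hcac]
    have hcaI : (c * a) * (c * a) = c * a := by
      rw [mul_assoc, ← mul_assoc a c a, haca]
    obtain ⟨w1, hw1⟩ := EhrAux.idem_mem_E (EhrAux.mul_mem ha hcreg) hacI
    obtain ⟨w2, hw2⟩ := EhrAux.idem_mem_E (EhrAux.mul_mem hcreg ha) hcaI
    have hacP : plus (a * c) = a * c := by rw [← hw1, EhrAux.pp]
    have hcaP : plus (c * a) = c * a := by rw [← hw2, EhrAux.pp]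
    have habP : plus (a * b) = a * b := by rw [hab, EhrAux.pp]
    have hbaP : plus (b * a) = b * a := by rw [hba, plus_estar]
    have habac : a * b = a * c := by
      calc a * b = a * c * a * b := by rw [haca]
        _ = (a * c) * (a * b) := by rw [mul_assoc (a * c) a b]
        _ = (a * b) * (a * c) := EhrAux.ecomm hacP habP
        _ = a * b * a * c := (mul_assoc (a * b) a c).symm
        _ = a * c := by rw [haba]
    have hbaca : b * a = c * a := by
      calc b * a = b * (a * c * a) := by rw [haca]
        _ = b * (a * (c * a)) := by rw [mul_assoc a c a]
        _ = (b * a) * (c * a) := (mul_assoc b a (c * a)).symm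
        _ = (c * a) * (b * a) := EhrAux.ecomm hbaP hcaP
        _ = c * (a * (b * a)) := by rw [mul_assoc]
        _ = c * (a * b * a) := by rw [mul_assoc a b a]
        _ = c * a := by rw [haba]
    calc c = c * a * c := hcac.symm
      _ = b * a * b := by rw [mul_assoc, ← habac, ← mul_assoc, ← hbaca]
      _ = b := hbab
  · ext x
    simp only [Set.mem_setOf_eq]
    constructor
    · rintro ⟨hx, hidem⟩
      exact EhrAux.idem_mem_E hx hidem
    · rintro ⟨w, hw⟩
      rw [← hw]
      exact EhrAux.E_mem w
end
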